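/- Suppose two stochastic kernels on Polish space X given X satisfy P_i(·|x) ≥ λ(·) for i = 1, 2, with λ a nonzero sub-probability measure, and each has a (unique) invariant probability measure μ_i. If P₁ = P₂, then μ₁ = μ₂; more generally, the invariant-measure map P ↦ μ_P is well-defined on the set of kernels satisfying this minorization, and if bounded continuous kernels P_n → P in the sense that P_n(·|x_n) → P(·|x) weakly whenever x_n → x, and μ_{P_n} → μ weakly, then μ = μ_P. -/

import Mathlib

open MeasureTheory ProbabilityTheory Filter Topology ENNReal NNReal BoundedContinuousFunction

namespace Stmt16Aux

section Part1

variable {X : Type*} [MeasurableSpace X]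

lemma contraction (lam : Measure X) (P : Kernel X X) [IsMarkovKernel P]
    (hlam_sub : lam Set.univ ≤ 1)
    (hmin : ∀ x : X, ∀ B : Set X, MeasurableSet B → lam B ≤ P x B)
    (α β : Measure X) [IsProbabilityMeasure α] [IsProbabilityMeasure β]
    (hα : α.bind P = α) (hβ : β.bind P = β)
    {S : Set X} (hS : MeasurableSet S)
    (h1 : β.restrict S ≤ α.restrict S) (h2 : α.restrict Sᶜ ≤ β.restrict Sᶜ) :
    α S - β S ≤ (1 - lam Sᶜ) * (α S - β S) := by
  set ρ : Measure X := α.restrict S - β.restrict S with hρdef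
  have hρ : ρ + β.restrict S = α.restrict S := Measure.sub_add_cancel_of_le h1
  have hρu : ρ Set.univ = α S - β S := by
    rw [hρdef, Measure.sub_apply MeasurableSet.univ h1,
      Measure.restrict_apply_univ, Measure.restrict_apply_univ]
  have hAS : α S = ∫⁻ x, P x S ∂α := by
    conv_lhs => rw [← hα]
    rw [Measure.bind_apply hS (P.measurable.aemeasurable)]
  have hBS : β S = ∫⁻ x, P x S ∂β := by
    conv_lhs => rw [← hβ]
    rw [Measure.bind_apply hS (P.measurable.aemeasurable)]
  have hlamne : lam Sᶜ ≠ ∞ :=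
    (((measure_mono (Set.subset_univ _)).trans hlam_sub).trans_lt one_lt_top).ne
  have hpt : ∀ x, P x S ≤ 1 - lam Sᶜ := by
    intro x
    have hadd : P x S + lam Sᶜ ≤ 1 := by
      calc P x S + lam Sᶜ ≤ P x S + P x Sᶜ :=
            add_le_add le_rfl (hmin x Sᶜ hS.compl)
        _ = 1 := by rw [measure_add_measure_compl hS, measure_univ]
    exact ENNReal.le_sub_of_add_le_right hlamne hadd
  have hsplitα : ∫⁻ x, P x S ∂α
      = (∫⁻ x, P x S ∂ρ + ∫⁻ x, P x S ∂(β.restrict S)) + ∫⁻ x, P x S ∂(α.restrict Sᶜ) := by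
    conv_lhs => rw [← Measure.restrict_add_restrict_compl (μ := α) hS, ← hρ]
    rw [lintegral_add_measure, lintegral_add_measure]
  have hsplitβ : ∫⁻ x, P x S ∂β
      = ∫⁻ x, P x S ∂(β.restrict S) + ∫⁻ x, P x S ∂(β.restrict Sᶜ) := by
    conv_lhs => rw [← Measure.restrict_add_restrict_compl (μ := β) hS]
    rw [lintegral_add_measure]
  have hb1 : ∫⁻ x, P x S ∂ρ ≤ (1 - lam Sᶜ) * (α S - β S) := by
    calc ∫⁻ x, P x S ∂ρ ≤ ∫⁻ _, (1 - lam Sᶜ) ∂ρ := lintegral_mono hpt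
      _ = (1 - lam Sᶜ) * ρ Set.univ := lintegral_const _
      _ = (1 - lam Sᶜ) * (α S - β S) := by rw [hρu]
  have hb2 : ∫⁻ x, P x S ∂(α.restrict Sᶜ) ≤ ∫⁻ x, P x S ∂(β.restrict Sᶜ) :=
    lintegral_mono' h2 le_rfl
  have hfinal : α S ≤ (1 - lam Sᶜ) * (α S - β S) + β S := by
    calc α S = (∫⁻ x, P x S ∂ρ + ∫⁻ x, P x S ∂(β.restrict S)) + ∫⁻ x, P x S ∂(α.restrict Sᶜ) := by
          rw [hAS, hsplitα]
      _ ≤ ((1 - lam Sᶜ) * (α S - β S) + ∫⁻ x, P x S ∂(β.restrict S)) + ∫⁻ x, P x S ∂(β.restrict Sᶜ) := by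
          exact add_le_add (add_le_add hb1 le_rfl) hb2
      _ = (1 - lam Sᶜ) * (α S - β S) + β S := by
          rw [add_assoc, ← hsplitβ, ← hBS]
  exact tsub_le_iff_right.mpr hfinal

lemma unique (lam : Measure X) (hlam_sub : lam Set.univ ≤ 1) (hlam_ne : lam ≠ 0)
    (P : Kernel X X) [IsMarkovKernel P]
    (hmin : ∀ x : X, ∀ B : Set X, MeasurableSet B → lam B ≤ P x B)
    (μ₁ μ₂ : Measure X) [IsProbabilityMeasure μ₁] [IsProbabilityMeasure μ₂]
    (hinv1 : μ₁.bind P = μ₁) (hinv2 : μ₂.bind P = μ₂) : μ₁ = μ₂ := by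
  obtain ⟨S, hS, hS1, hS2⟩ := hahn_decomposition (μ := μ₁) (ν := μ₂)
  have h1 : μ₂.restrict S ≤ μ₁.restrict S := by
    refine Measure.le_iff.mpr fun t ht => ?_
    rw [Measure.restrict_apply ht, Measure.restrict_apply ht]
    exact hS1 _ (ht.inter hS) Set.inter_subset_right
  have h2 : μ₁.restrict Sᶜ ≤ μ₂.restrict Sᶜ := by
    refine Measure.le_iff.mpr fun t ht => ?_
    rw [Measure.restrict_apply ht, Measure.restrict_apply ht]
    exact hS2 _ (ht.inter hS.compl) Set.inter_subset_right
  have h1' : μ₂.restrict Sᶜᶜ ≤ μ₁.restrict Sᶜᶜ := by rw [compl_compl]; exact h1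
  have hdineq : μ₁ S - μ₂ S ≤ (1 - lam Sᶜ) * (μ₁ S - μ₂ S) :=
    contraction lam P hlam_sub hmin μ₁ μ₂ hinv1 hinv2 hS h1 h2
  have hdineq' : μ₂ Sᶜ - μ₁ Sᶜ ≤ (1 - lam S) * (μ₂ Sᶜ - μ₁ Sᶜ) := by
    have := contraction lam P hlam_sub hmin μ₂ μ₁ hinv2 hinv1 hS.compl h2 h1'
    rwa [compl_compl] at this
  have hle_ts : μ₂ S ≤ μ₁ S := hS1 S hS subset_rfl
  have hle_c : μ₁ Sᶜ ≤ μ₂ Sᶜ := hS2 Sᶜ hS.compl subset_rfl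
  set d := μ₁ S - μ₂ S with hd
  set d' := μ₂ Sᶜ - μ₁ Sᶜ with hd'
  have hne1 : μ₂ S ≠ ∞ := measure_ne_top _ _
  have hne2 : μ₁ Sᶜ ≠ ∞ := measure_ne_top _ _
  have hdd' : d = d' := by
    have e1 : d + (μ₂ S + μ₁ Sᶜ) = 1 := by
      rw [hd, ← add_assoc, tsub_add_cancel_of_le hle_ts, measure_add_measure_compl hS,
        measure_univ]
    have e2 : d' + (μ₂ S + μ₁ Sᶜ) = 1 := by
      rw [hd', add_comm (μ₂ S) (μ₁ Sᶜ), ← add_assoc, tsub_add_cancel_of_le hle_c,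
        add_comm, measure_add_measure_compl hS, measure_univ]
    have := e1.trans e2.symm
    exact (ENNReal.add_left_inj (by finiteness)).mp this
  have hdne : d ≠ ∞ := by
    rw [hd]; exact (tsub_le_self.trans_lt (measure_lt_top _ _)).ne
  have hd0 : d = 0 := by
    by_contra hd0
    have hlamS : lam S ≠ 0 ∨ lam Sᶜ ≠ 0 := by
      by_contra h
      push_neg at h
      apply hlam_ne
      have : lam Set.univ = 0 := by
        rw [← measure_add_measure_compl hS, h.1, h.2, add_zero]
      exact Measure.measure_univ_eq_zero.mp this
    rcases hlamS with h | h
    · have hd0' : d' ≠ 0 := by rwa [← hdd']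
      have hdne' : d' ≠ ∞ := by rwa [← hdd']
      have hlt : (1 : ℝ≥0∞) - lam S < 1 := ENNReal.sub_lt_self one_ne_top one_ne_zero h
      have : (1 - lam S) * d' < 1 * d' := ENNReal.mul_lt_mul_left hd0' hdne' hlt
      rw [one_mul] at this
      exact absurd (hdineq'.trans_lt this) (lt_irrefl d')
    · have hlt : (1 : ℝ≥0∞) - lam Sᶜ < 1 := ENNReal.sub_lt_self one_ne_top one_ne_zero h
      have : (1 - lam Sᶜ) * d < 1 * d := ENNReal.mul_lt_mul_left hd0 hdne hlt
      rw [one_mul] at this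
      exact absurd (hdineq.trans_lt this) (lt_irrefl d)
  have hd'0 : d' = 0 := hdd' ▸ hd0
  have hr1 : μ₁.restrict S = μ₂.restrict S := by
    have hz : (μ₁.restrict S - μ₂.restrict S) = 0 := by
      apply Measure.measure_univ_eq_zero.mp
      rw [Measure.sub_apply MeasurableSet.univ h1, Measure.restrict_apply_univ,
        Measure.restrict_apply_univ]
      exact hd0
    have := Measure.sub_add_cancel_of_le h1
    rw [hz, zero_add] at this
    exact this.symm
  have hr2 : μ₂.restrict Sᶜ = μ₁.restrict Sᶜ := by
    have hz : (μ₂.restrict Sᶜ - μ₁.restrict Sᶜ) = 0 := by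
      apply Measure.measure_univ_eq_zero.mp
      rw [Measure.sub_apply MeasurableSet.univ h2, Measure.restrict_apply_univ,
        Measure.restrict_apply_univ]
      exact hd'0
    have := Measure.sub_add_cancel_of_le h2
    rw [hz, zero_add] at this
    exact this.symm
  calc μ₁ = μ₁.restrict S + μ₁.restrict Sᶜ := (Measure.restrict_add_restrict_compl hS).symm
    _ = μ₂.restrict S + μ₂.restrict Sᶜ := by rw [hr1, hr2]
    _ = μ₂ := Measure.restrict_add_restrict_compl hS

end Part1

section Part2Aux

variable {X : Type*} [MeasurableSpace X] [TopologicalSpace X] [OpensMeasurableSpace X]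

omit [TopologicalSpace X] [OpensMeasurableSpace X] in
lemma isProbBind (κ : Kernel X X) [IsMarkovKernel κ] (μ : Measure X)
    [IsProbabilityMeasure μ] : IsProbabilityMeasure (μ.bind ⇑κ) := by
  constructor
  rw [Measure.bind_apply MeasurableSet.univ κ.measurable.aemeasurable]
  simp

lemma lintegral_nn_bind (κ : Kernel X X) [IsMarkovKernel κ] (μ : Measure X)
    (h : X →ᵇ ℝ≥0) :
    ∫⁻ y, h y ∂(μ.bind ⇑κ) = ∫⁻ x, ∫⁻ y, h y ∂(κ x) ∂μ :=
  Measure.lintegral_bind κ.measurable.aemeasurable h.measurable_coe_ennreal_comp.aemeasurable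

lemma integral_nn_bind (κ : Kernel X X) [IsMarkovKernel κ] (μ : Measure X)
    [IsProbabilityMeasure μ] (h : X →ᵇ ℝ≥0) :
    ∫ y, (h y : ℝ) ∂(μ.bind ⇑κ) = ∫ x, (∫ y, (h y : ℝ) ∂(κ x)) ∂μ := by
  have Hmeas : Measurable fun x => ∫⁻ y, (h y : ℝ≥0∞) ∂(κ x) :=
    Measurable.lintegral_kernel h.measurable_coe_ennreal_comp
  have Hlt : ∀ x, (∫⁻ y, (h y : ℝ≥0∞) ∂(κ x)) < ∞ := fun x =>
    h.lintegral_lt_top_of_nnreal (κ x)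
  calc ∫ y, (h y : ℝ) ∂(μ.bind ⇑κ)
      = (∫⁻ y, (h y : ℝ≥0∞) ∂(μ.bind ⇑κ)).toReal :=
        (h.toReal_lintegral_coe_eq_integral (μ.bind ⇑κ)).symm
    _ = (∫⁻ x, ∫⁻ y, (h y : ℝ≥0∞) ∂(κ x) ∂μ).toReal := by rw [lintegral_nn_bind]
    _ = ∫ x, (∫⁻ y, (h y : ℝ≥0∞) ∂(κ x)).toReal ∂μ :=
        (integral_toReal Hmeas.aemeasurable (Filter.Eventually.of_forall Hlt)).symm
    _ = ∫ x, (∫ y, (h y : ℝ) ∂(κ x)) ∂μ := by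
        congr 1
        ext x
        exact h.toReal_lintegral_coe_eq_integral (κ x)

lemma integrable_inner_nn (κ : Kernel X X) [IsMarkovKernel κ] (μ : Measure X)
    [IsProbabilityMeasure μ] (h : X →ᵇ ℝ≥0) :
    Integrable (fun x => ∫ y, (h y : ℝ) ∂(κ x)) μ := by
  have lip : LipschitzWith 1 ((↑) : ℝ≥0 → ℝ) := isometry_subtype_coe.lipschitz
  set hr : X →ᵇ ℝ := BoundedContinuousFunction.comp _ lip h with hhr
  have hr_eq : ∀ y, hr y = (h y : ℝ) := fun y => rfl
  have Hmeas : Measurable fun x => ∫⁻ y, (h y : ℝ≥0∞) ∂(κ x) :=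
    Measurable.lintegral_kernel h.measurable_coe_ennreal_comp
  have hmeas : Measurable fun x => ∫ y, (h y : ℝ) ∂(κ x) := by
    have : (fun x => ∫ y, (h y : ℝ) ∂(κ x))
        = fun x => (∫⁻ y, (h y : ℝ≥0∞) ∂(κ x)).toReal := by
      ext x; exact (h.toReal_lintegral_coe_eq_integral (κ x)).symm
    rw [this]
    exact Hmeas.ennreal_toReal
  refine ⟨hmeas.aestronglyMeasurable, ?_⟩
  apply HasFiniteIntegral.of_bounded (C := ‖hr‖)
  refine Filter.Eventually.of_forall fun x => ?_
  simp_rw [← hr_eq]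
  exact hr.norm_integral_le_norm (κ x)

lemma integral_bind_bcf (κ : Kernel X X) [IsMarkovKernel κ] (μ : Measure X)
    [IsProbabilityMeasure μ] (f : X →ᵇ ℝ) :
    ∫ y, f y ∂(μ.bind ⇑κ) = ∫ x, (∫ y, f y ∂(κ x)) ∂μ := by
  haveI := isProbBind κ μ
  rw [f.integral_eq_integral_nnrealPart_sub (μ := μ.bind ⇑κ),
    integral_nn_bind κ μ f.nnrealPart, integral_nn_bind κ μ (-f).nnrealPart,
    ← integral_sub (integrable_inner_nn κ μ f.nnrealPart)
      (integrable_inner_nn κ μ (-f).nnrealPart)]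
  congr 1
  ext x
  exact (f.integral_eq_integral_nnrealPart_sub (μ := κ x)).symm

lemma ext_bcf [BorelSpace X] [HasOuterApproxClosed X]
    (α β : Measure X) [IsProbabilityMeasure α] [IsProbabilityMeasure β]
    (h : ∀ f : X →ᵇ ℝ, ∫ x, f x ∂α = ∫ x, f x ∂β) : α = β := by
  apply ext_of_forall_lintegral_eq_of_IsFiniteMeasure
  intro g
  have lip : LipschitzWith 1 ((↑) : ℝ≥0 → ℝ) := isometry_subtype_coe.lipschitz
  have hg := h (BoundedContinuousFunction.comp _ lip g)
  have e1 := g.toReal_lintegral_coe_eq_integral α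
  have e2 := g.toReal_lintegral_coe_eq_integral β
  have : (∫⁻ x, (g x : ℝ≥0∞) ∂α).toReal = (∫⁻ x, (g x : ℝ≥0∞) ∂β).toReal := by
    rw [e1, e2]; exact hg
  exact (ENNReal.toReal_eq_toReal_iff' (g.lintegral_lt_top_of_nnreal α).ne
    (g.lintegral_lt_top_of_nnreal β).ne).mp this

end Part2Aux

lemma union_interior_eq_univ {X : Type*} [MetricSpace X]
    (h : ℕ → X → ℝ) {δ : ℝ} (hδ : 0 < δ)
    (hcc : ∀ (xs : ℕ → X) (x : X), Tendsto xs atTop (𝓝 x) →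
      Tendsto (fun n => h n (xs n)) atTop (𝓝 0)) :
    (⋃ N : ℕ, interior {x | ∀ m, N ≤ m → |h m x| ≤ δ}) = Set.univ := by
  ext x
  simp only [Set.mem_univ, iff_true, Set.mem_iUnion]
  by_contra hx
  push_neg at hx
  have hbad : ∀ N k : ℕ, ∃ m, N ≤ m ∧ ∃ y, dist y x < 1/(k+1) ∧ δ < |h m y| := by
    intro N k
    by_contra hcon
    push_neg at hcon
    apply hx N
    apply mem_interior.mpr
    refine ⟨Metric.ball x (1/(k+1)), ?_, Metric.isOpen_ball,
      Metric.mem_ball_self (by positivity)⟩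
    intro y hy m hm
    exact hcon m hm y (by simpa [Metric.mem_ball] using hy)
  classical
  let pick : ℕ → ℕ → ℕ × X := fun N k =>
    ⟨(hbad N k).choose, (hbad N k).choose_spec.2.choose⟩
  have pick_spec : ∀ N k, N ≤ (pick N k).1 ∧ dist (pick N k).2 x < 1/(k+1) ∧
      δ < |h (pick N k).1 (pick N k).2| := by
    intro N k
    exact ⟨(hbad N k).choose_spec.1, (hbad N k).choose_spec.2.choose_spec⟩
  let F : ℕ → ℕ × X := fun k => Nat.rec (pick 0 0) (fun k ih => pick (ih.1 + 1) (k+1)) k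
  have hFs : ∀ k, F (k+1) = pick ((F k).1 + 1) (k+1) := fun k => rfl
  have hlt : ∀ k, (F k).1 < (F (k+1)).1 := by
    intro k
    rw [hFs k]
    exact Nat.lt_of_succ_le (pick_spec ((F k).1 + 1) (k+1)).1
  have hsm : StrictMono (fun k => (F k).1) := strictMono_nat_of_lt_succ hlt
  have hdist : ∀ k, dist (F k).2 x < 1/(k+1) := by
    intro k
    cases k with
    | zero => exact (pick_spec 0 0).2.1
    | succ k => rw [hFs k]; exact (pick_spec ((F k).1 + 1) (k+1)).2.1
  have hbig : ∀ k, δ < |h (F k).1 (F k).2| := by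
    intro k
    cases k with
    | zero => exact (pick_spec 0 0).2.2
    | succ k => rw [hFs k]; exact (pick_spec ((F k).1 + 1) (k+1)).2.2
  set xs : ℕ → X := fun m => if hm : ∃ k, (F k).1 = m then (F hm.choose).2 else x with hxs
  have htend : Tendsto xs atTop (𝓝 x) := by
    rw [Metric.tendsto_atTop]
    intro r hr
    obtain ⟨K, hK⟩ := exists_nat_one_div_lt hr
    refine ⟨(F K).1, fun m hm => ?_⟩
    by_cases hex : ∃ k, (F k).1 = m
    · rw [hxs]
      simp only [dif_pos hex]
      have hk0 : (F hex.choose).1 = m := hex.choose_spec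
      have hK_le : K ≤ hex.choose := by
        have : (F K).1 ≤ (F hex.choose).1 := by rw [hk0]; exact hm
        exact hsm.le_iff_le.mp this
      calc dist (F hex.choose).2 x < 1/(hex.choose+1) := hdist _
        _ ≤ 1/(K+1) := by
            apply one_div_le_one_div_of_le (by positivity)
            exact_mod_cast Nat.succ_le_succ hK_le
        _ < r := hK
    · rw [hxs]
      simp only [dif_neg hex]
      simpa [dist_self] using hr
  have hlim := hcc xs x htend
  obtain ⟨M, hM⟩ := (Metric.tendsto_atTop.mp hlim) δ hδ
  have hex : ∃ k, (F k).1 = (F M).1 := ⟨M, rfl⟩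
  have hchoose : hex.choose = M := hsm.injective hex.choose_spec
  have hxsM : xs ((F M).1) = (F M).2 := by
    rw [hxs]
    simp only [dif_pos hex]
    rw [hchoose]
  have hMle : M ≤ (F M).1 := hsm.le_apply
  have := hM ((F M).1) hMle
  rw [hxsM, Real.dist_eq, sub_zero] at this
  exact absurd this (not_lt.mpr (le_of_lt (hbig M)))

lemma tendsto_diff_zero {X : Type*} [MetricSpace X] [MeasurableSpace X] [BorelSpace X]
    (μseq : ℕ → Measure X) (μ : Measure X)
    (hprob : ∀ n, IsProbabilityMeasure (μseq n)) (hprobμ : IsProbabilityMeasure μ)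
    (hweak : ∀ f : X →ᵇ ℝ,
      Tendsto (fun n => ∫ x, f x ∂(μseq n)) atTop (𝓝 (∫ x, f x ∂μ)))
    (h : ℕ → X → ℝ) {C : ℝ} (hC : 0 ≤ C) (hbound : ∀ n x, |h n x| ≤ C)
    (hint : ∀ n, Integrable (h n) (μseq n))
    (hcc : ∀ (xs : ℕ → X) (x : X), Tendsto xs atTop (𝓝 x) →
      Tendsto (fun n => h n (xs n)) atTop (𝓝 0)) :
    Tendsto (fun n => ∫ x, h n x ∂(μseq n)) atTop (𝓝 0) := by
  haveI := hprob; haveI := hprobμ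
  rw [NormedAddCommGroup.tendsto_nhds_zero]
  intro ε hε
  set δ : ℝ := ε / (2 * (1 + C)) with hδdef
  have hδ : 0 < δ := by positivity
  set A : ℕ → Set X := fun N => {x | ∀ m, N ≤ m → |h m x| ≤ δ} with hA
  set U : ℕ → Set X := fun N => interior (A N) with hU
  have hUnion : (⋃ N, U N) = Set.univ := union_interior_eq_univ h hδ hcc
  have hmonoU : Monotone U := by
    intro N N' hNN'
    apply interior_mono
    intro x hx m hm
    exact hx m (hNN'.trans hm)
  have htend_meas : Tendsto (fun N => μ (U N)) atTop (𝓝 1) := by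
    have := tendsto_measure_iUnion_atTop (μ := μ) hmonoU
    rwa [hUnion, measure_univ] at this
  have hc_lt : (1 : ℝ≥0∞) - ENNReal.ofReal δ < 1 := by
    apply ENNReal.sub_lt_self one_ne_top one_ne_zero
    simpa using hδ
  obtain ⟨N, hN⟩ := (htend_meas.eventually_const_lt hc_lt).exists
  let ν : ℕ → ProbabilityMeasure X := fun n => ⟨μseq n, hprob n⟩
  let νlim : ProbabilityMeasure X := ⟨μ, hprobμ⟩
  have hconv : Tendsto ν atTop (𝓝 νlim) :=
    ProbabilityMeasure.tendsto_iff_forall_integral_tendsto.mpr hweak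
  have hlimf : (μ : Measure X) (U N) ≤ atTop.liminf fun n => (μseq n) (U N) :=
    ProbabilityMeasure.le_liminf_measure_open_of_tendsto hconv isOpen_interior
  have hev : ∀ᶠ n in atTop, (1 : ℝ≥0∞) - ENNReal.ofReal δ < (μseq n) (U N) :=
    eventually_lt_of_lt_liminf (hN.trans_le hlimf)
  have hUmeas : MeasurableSet (U N) := isOpen_interior.measurableSet
  filter_upwards [hev, eventually_ge_atTop N] with n hn1 hn2
  have hda : (μseq n) (U N)ᶜ ≤ ENNReal.ofReal δ := by
    rcases le_or_gt 1 (ENNReal.ofReal δ) with hd | hd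
    · exact (prob_le_one).trans hd
    · rw [prob_compl_eq_one_sub hUmeas]
      refine tsub_le_iff_right.mpr ?_
      calc (1:ℝ≥0∞) = (1 - ENNReal.ofReal δ) + ENNReal.ofReal δ :=
            (tsub_add_cancel_of_le hd.le).symm
        _ ≤ (μseq n) (U N) + ENNReal.ofReal δ := add_le_add hn1.le le_rfl
        _ = ENNReal.ofReal δ + (μseq n) (U N) := add_comm _ _
  have htcompl : ((μseq n) (U N)ᶜ).toReal ≤ δ :=
    ENNReal.toReal_le_of_le_ofReal hδ.le hda
  have hsplit : ∫ x, h n x ∂(μseq n)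
      = (∫ x in U N, h n x ∂(μseq n)) + ∫ x in (U N)ᶜ, h n x ∂(μseq n) :=
    (integral_add_compl hUmeas (hint n)).symm
  have hb1 : ‖∫ x in U N, h n x ∂(μseq n)‖ ≤ δ * ((μseq n) (U N)).toReal := by
    apply norm_setIntegral_le_of_norm_le_const_ae' (measure_lt_top _ _)
    refine Filter.Eventually.of_forall fun x hx => ?_
    rw [Real.norm_eq_abs]
    exact (interior_subset hx) n hn2
  have hb2 : ‖∫ x in (U N)ᶜ, h n x ∂(μseq n)‖ ≤ C * ((μseq n) (U N)ᶜ).toReal := by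
    apply norm_setIntegral_le_of_norm_le_const_ae' (measure_lt_top _ _)
    refine Filter.Eventually.of_forall fun x _ => ?_
    rw [Real.norm_eq_abs]
    exact hbound n x
  have hle1 : ((μseq n) (U N)).toReal ≤ 1 := by
    have := ENNReal.toReal_mono one_ne_top (prob_le_one (μ := μseq n) (s := U N))
    simpa using this
  calc ‖∫ x, h n x ∂(μseq n)‖
      ≤ ‖∫ x in U N, h n x ∂(μseq n)‖ + ‖∫ x in (U N)ᶜ, h n x ∂(μseq n)‖ := by
        rw [hsplit]; exact norm_add_le _ _
    _ ≤ δ * 1 + C * δ := by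
        gcongr
        · exact hb1.trans (mul_le_mul_of_nonneg_left hle1 hδ.le)
        · exact hb2.trans (mul_le_mul_of_nonneg_left htcompl hC)
    _ < ε := by
        have h1C : (0:ℝ) < 1 + C := by linarith
        have key : δ * (1 + C) = ε / 2 := by
          rw [hδdef]; field_simp
        calc δ * 1 + C * δ = δ * (1 + C) := by ring
          _ = ε / 2 := key
          _ < ε := by linarith

end Stmt16Aux

/-- Under the minorization `P(·|x) ≥ λ` (λ a nonzero sub-probability),
the invariant probability measure of a kernel is unique (so `P₁ = P₂` forces
`μ₁ = μ₂`), and the invariant-measure map has closed graph: if weakly continuous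
kernels `P n → P` in the sense `P n (·|x n) → P(·|x)` weakly whenever `x n → x`, and
their invariant probability measures `μ n → μ` weakly, then `μ` is invariant for `P`. -/
theorem stmt16
    {X : Type*}
    [MetricSpace X] [CompleteSpace X] [TopologicalSpace.SeparableSpace X]
    [MeasurableSpace X] [BorelSpace X]
    (lam : Measure X) [IsFiniteMeasure lam]
    (hlam_sub : lam Set.univ ≤ 1) (hlam_ne : lam ≠ 0) :
    (∀ P₁ P₂ : Kernel X X, IsMarkovKernel P₁ → IsMarkovKernel P₂ →
      (∀ x : X, ∀ B : Set X, MeasurableSet B → lam B ≤ P₁ x B) →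
      (∀ x : X, ∀ B : Set X, MeasurableSet B → lam B ≤ P₂ x B) →
      ∀ μ₁ μ₂ : Measure X, IsProbabilityMeasure μ₁ → IsProbabilityMeasure μ₂ →
        μ₁.bind P₁ = μ₁ → μ₂.bind P₂ = μ₂ → P₁ = P₂ → μ₁ = μ₂) ∧
    (∀ (Pseq : ℕ → Kernel X X) (P : Kernel X X),
      (∀ n, IsMarkovKernel (Pseq n)) → IsMarkovKernel P →
      (∀ n x, ∀ B : Set X, MeasurableSet B → lam B ≤ Pseq n x B) →
      (∀ x, ∀ B : Set X, MeasurableSet B → lam B ≤ P x B) →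
      (∀ n, ∀ f : BoundedContinuousFunction X ℝ,
        Continuous fun x => ∫ y, f y ∂(Pseq n x)) →
      (∀ f : BoundedContinuousFunction X ℝ, Continuous fun x => ∫ y, f y ∂(P x)) →
      (∀ (xs : ℕ → X) (x : X), Tendsto xs atTop (𝓝 x) →
        ∀ f : BoundedContinuousFunction X ℝ,
          Tendsto (fun n => ∫ y, f y ∂(Pseq n (xs n))) atTop (𝓝 (∫ y, f y ∂(P x)))) →
      ∀ (μseq : ℕ → Measure X) (μ : Measure X),
        (∀ n, IsProbabilityMeasure (μseq n)) → IsProbabilityMeasure μ →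
        (∀ n, (μseq n).bind (Pseq n) = μseq n) →
        (∀ f : BoundedContinuousFunction X ℝ,
          Tendsto (fun n => ∫ y, f y ∂(μseq n)) atTop (𝓝 (∫ y, f y ∂μ))) →
        μ.bind P = μ) := by
  constructor
  · intro P₁ P₂ hm1 hm2 hmin1 hmin2 μ₁ μ₂ hp1 hp2 hi1 hi2 heq
    subst heq
    haveI := hm1; haveI := hp1; haveI := hp2
    exact Stmt16Aux.unique lam hlam_sub hlam_ne P₁ hmin1 μ₁ μ₂ hi1 hi2
  · intro Pseq P hmseq hmP hminseq hminP hPcn hPcP hPconv μseq μ hprobseq hprobμ hinv hweak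
    haveI := hmP
    haveI := fun n => hmseq n
    haveI := hprobμ
    haveI := fun n => hprobseq n
    haveI := Stmt16Aux.isProbBind P μ
    apply Stmt16Aux.ext_bcf (μ.bind ⇑P) μ
    intro f
    rw [Stmt16Aux.integral_bind_bcf P μ f]
    -- bounded continuous versions of the integrated kernels
    have hgb : ∀ x, ‖∫ y, f y ∂(P x)‖ ≤ ‖f‖ := fun x => f.norm_integral_le_norm (P x)
    have hgbn : ∀ n x, ‖∫ y, f y ∂(Pseq n x)‖ ≤ ‖f‖ := fun n x =>
      f.norm_integral_le_norm (Pseq n x)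
    set G : X →ᵇ ℝ :=
      BoundedContinuousFunction.ofNormedAddCommGroup _ (hPcP f) ‖f‖ hgb with hG
    set Gn : ℕ → X →ᵇ ℝ := fun n =>
      BoundedContinuousFunction.ofNormedAddCommGroup _ (hPcn n f) ‖f‖ (hgbn n) with hGn
    have hGeq : ∀ x, G x = ∫ y, f y ∂(P x) := fun x => rfl
    have hGneq : ∀ n x, Gn n x = ∫ y, f y ∂(Pseq n x) := fun n x => rfl
    set h : ℕ → X → ℝ := fun n x => Gn n x - G x with hh
    have hcc : ∀ (xs : ℕ → X) (x : X), Tendsto xs atTop (𝓝 x) →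
        Tendsto (fun n => h n (xs n)) atTop (𝓝 0) := by
      intro xs x htends
      have t1 := hPconv xs x htends f
      have t2 : Tendsto (fun n => G (xs n)) atTop (𝓝 (G x)) :=
        (G.continuous.tendsto x).comp htends
      have := t1.sub t2
      rw [hGeq x, sub_self] at this
      exact this
    have hbound : ∀ n x, |h n x| ≤ ‖f‖ + ‖f‖ := by
      intro n x
      calc |h n x| ≤ |Gn n x| + |G x| := abs_sub _ _
        _ ≤ ‖f‖ + ‖f‖ := add_le_add (hgbn n x) (hgb x)
    have hint : ∀ n, Integrable (h n) (μseq n) := fun n =>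
      ((Gn n).integrable (μseq n)).sub (G.integrable (μseq n))
    have hdiff : Tendsto (fun n => ∫ x, h n x ∂(μseq n)) atTop (𝓝 0) :=
      Stmt16Aux.tendsto_diff_zero μseq μ hprobseq hprobμ hweak h
        (by positivity) hbound hint hcc
    have hGn_int : ∀ n, ∫ x, Gn n x ∂(μseq n) = ∫ x, f x ∂(μseq n) := by
      intro n
      have := Stmt16Aux.integral_bind_bcf (Pseq n) (μseq n) f
      rw [hinv n] at this
      exact this.symm
    have hsum : ∀ n, ∫ x, h n x ∂(μseq n)
        = ∫ x, Gn n x ∂(μseq n) - ∫ x, G x ∂(μseq n) := fun n =>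
      integral_sub ((Gn n).integrable (μseq n)) (G.integrable (μseq n))
    have hT1 : Tendsto (fun n => ∫ x, Gn n x ∂(μseq n)) atTop
        (𝓝 (0 + ∫ x, G x ∂μ)) := by
      have : (fun n => ∫ x, Gn n x ∂(μseq n))
          = fun n => (∫ x, h n x ∂(μseq n)) + ∫ x, G x ∂(μseq n) := by
        ext n; rw [hsum n]; ring
      rw [this]
      exact hdiff.add (hweak G)
    have hT2 : Tendsto (fun n => ∫ x, Gn n x ∂(μseq n)) atTop (𝓝 (∫ x, f x ∂μ)) := by
      have : (fun n => ∫ x, Gn n x ∂(μseq n)) = fun n => ∫ x, f x ∂(μseq n) := by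
        ext n; exact hGn_int n
      rw [this]
      exact hweak f
    have := tendsto_nhds_unique hT1 hT2
    rw [zero_add] at this
    exact this
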